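/- Let X_j, Z_j (1 ≤ j ≤ k) be invertible matrices satisfying Z_j X_j = Ω X_j Z_j with Ω a primitive q-th root of unity, and all other pairs commuting ([X_i, X_j] = [Z_i, Z_j] = 0, [X_i, Z_j] = 0 for i ≠ j). Then any representation of this algebra has dimension at least q^k. -/

import Mathlib

open Matrix Finset

namespace WeylDim

variable {k d q : ℕ} {Ω : ℂ}
variable {X Z : Fin k → Matrix (Fin d) (Fin d) ℂ}

/-- ordered product of powers `∏ Y i ^ m i` over a finset, for pairwise commuting `Y`. -/
noncomputable def pprod (Y : Fin k → Matrix (Fin d) (Fin d) ℂ)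
    (hYY : ∀ i j, Commute (Y i) (Y j)) (s : Finset (Fin k)) (m : Fin k → ℕ) :
    Matrix (Fin d) (Fin d) ℂ :=
  s.noncommProd (fun i => Y i ^ m i) (fun i _ j _ _ => (hYY i j).pow_pow _ _)

lemma pprod_empty (Y : Fin k → Matrix (Fin d) (Fin d) ℂ) (hYY) (m : Fin k → ℕ) :
    pprod Y hYY ∅ m = 1 := Finset.noncommProd_empty _ _

lemma pprod_insert (Y : Fin k → Matrix (Fin d) (Fin d) ℂ) (hYY) {a : Fin k}
    {s : Finset (Fin k)} (ha : a ∉ s) (m : Fin k → ℕ) :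
    pprod Y hYY (insert a s) m = Y a ^ m a * pprod Y hYY s m :=
  Finset.noncommProd_insert_of_notMem _ _ _ _ ha

lemma commute_pprod (Y : Fin k → Matrix (Fin d) (Fin d) ℂ) (hYY)
    (s : Finset (Fin k)) (m : Fin k → ℕ) (A : Matrix (Fin d) (Fin d) ℂ)
    (hA : ∀ i ∈ s, Commute A (Y i ^ m i)) : Commute A (pprod Y hYY s m) :=
  Finset.noncommProd_commute _ _ _ _ hA

lemma isUnit_pprod (Y : Fin k → Matrix (Fin d) (Fin d) ℂ) (hYY)
    (hY : ∀ i, IsUnit (Y i)) (s : Finset (Fin k)) (m : Fin k → ℕ) :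
    IsUnit (pprod Y hYY s m) := by
  induction s using Finset.induction_on with
  | empty => rw [pprod_empty]; exact isUnit_one
  | @insert _ _ ha ih => rw [pprod_insert _ _ ha]; exact ((hY _).pow _).mul ih

lemma z_xpow (hrel : ∀ j, Z j * X j = Ω • (X j * Z j)) (j : Fin k) (t : ℕ) :
    Z j * X j ^ t = Ω ^ t • (X j ^ t * Z j) := by
  induction t with
  | zero => simp
  | succ t ih =>
    calc Z j * X j ^ (t + 1) = (Z j * X j ^ t) * X j := by rw [pow_succ, mul_assoc]
    _ = Ω ^ t • (X j ^ t * (Z j * X j)) := by rw [ih]; simp [smul_mul_assoc, mul_assoc]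
    _ = Ω ^ t • (X j ^ t * (Ω • (X j * Z j))) := by rw [hrel j]
    _ = Ω ^ (t + 1) • (X j ^ (t + 1) * Z j) := by
        simp [mul_smul_comm, smul_smul, pow_succ, mul_assoc, mul_comm]

lemma zpow_xpow (hrel : ∀ j, Z j * X j = Ω • (X j * Z j)) (j : Fin k) (s t : ℕ) :
    Z j ^ s * X j ^ t = Ω ^ (s * t) • (X j ^ t * Z j ^ s) := by
  induction s with
  | zero => simp
  | succ s ih =>
    calc Z j ^ (s + 1) * X j ^ t = Z j ^ s * (Z j * X j ^ t) := by
          rw [pow_succ, mul_assoc]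
    _ = Ω ^ t • (Z j ^ s * X j ^ t * Z j) := by
          rw [z_xpow hrel]; simp [mul_smul_comm, mul_assoc]
    _ = Ω ^ t • ((Ω ^ (s * t)) • (X j ^ t * Z j ^ s * Z j)) := by
          rw [ih]; simp [smul_mul_assoc]
    _ = Ω ^ ((s + 1) * t) • (X j ^ t * Z j ^ (s + 1)) := by
        rw [smul_smul, ← pow_add, mul_assoc, ← pow_succ]
        ring_nf

lemma zps_xpow (hrel : ∀ j, Z j * X j = Ω • (X j * Z j))
    (hXZ : ∀ i j, i ≠ j → Commute (X i) (Z j)) (hZZ : ∀ i j, Commute (Z i) (Z j))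
    (s : Finset (Fin k)) (m : Fin k → ℕ) (j : Fin k) (t : ℕ) :
    pprod Z hZZ s m * X j ^ t
      = Ω ^ ((if j ∈ s then m j else 0) * t) • (X j ^ t * pprod Z hZZ s m) := by
  induction s using Finset.induction_on with
  | empty => simp [pprod_empty]
  | @insert i s hi ih =>
    rw [pprod_insert _ _ hi, mul_assoc, ih]
    by_cases hij : i = j
    · subst hij
      have hins : i ∉ s := hi
      rw [if_neg hins, if_pos (mem_insert_self i s)]
      simp only [zero_mul, pow_zero, one_smul, mul_smul_comm]
      rw [← mul_assoc, zpow_xpow hrel, smul_mul_assoc, mul_assoc]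
    · have hc : Z i ^ m i * X j ^ t = X j ^ t * Z i ^ m i :=
        ((hXZ j i (Ne.symm hij)).symm.pow_pow _ _).eq
      have hji : ¬ j = i := fun h => hij h.symm
      simp only [Finset.mem_insert, hji, false_or]
      rw [mul_smul_comm, ← mul_assoc, hc, mul_assoc]

lemma zp_xps (hrel : ∀ j, Z j * X j = Ω • (X j * Z j))
    (hXZ : ∀ i j, i ≠ j → Commute (X i) (Z j)) (hZZ : ∀ i j, Commute (Z i) (Z j))
    (hXX : ∀ i j, Commute (X i) (X j))
    (s : Finset (Fin k)) (m a : Fin k → ℕ) :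
    pprod Z hZZ univ m * pprod X hXX s a
      = Ω ^ (∑ j ∈ s, m j * a j) • (pprod X hXX s a * pprod Z hZZ univ m) := by
  induction s using Finset.induction_on with
  | empty => simp [pprod_empty]
  | @insert i s hi ih =>
    rw [pprod_insert _ _ hi, ← mul_assoc, zps_xpow hrel hXZ hZZ, if_pos (mem_univ i),
      smul_mul_assoc, mul_assoc, ih, mul_smul_comm, smul_smul, ← pow_add,
      Finset.sum_insert hi, ← mul_assoc]

lemma key_gen (A B C D : Matrix (Fin d) (Fin d) ℂ) (α β γ : ℂ)
    (hAD : A*D = D*A) (hBC : B*C = C*B)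
    (hCA : C*A = α • (A*C)) (hCD : C*D = γ • (D*C)) (hBD : B*D = β • (D*B)) :
    β • ((C*D)*(A*B)) = α • ((A*B)*(C*D)) := by
  have h1 : (C*D)*(A*B) = (α*γ) • ((A*(D*C))*B) := by
    have e1 : (C*D)*(A*B) = C*((A*D)*B) := by rw [hAD]; noncomm_ring
    have e2 : C*((A*D)*B) = ((C*A)*D)*B := by noncomm_ring
    have e3 : ((A*C)*D)*B = (A*(C*D))*B := by noncomm_ring
    rw [e1, e2, hCA, smul_mul_assoc, smul_mul_assoc, e3, hCD, mul_smul_comm,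
      smul_mul_assoc, smul_smul]
  have h2 : (A*B)*(C*D) = (β*γ) • ((A*(D*C))*B) := by
    have e1 : (A*B)*(C*D) = A*((C*B)*D) := by rw [← hBC]; noncomm_ring
    have e2 : A*((C*B)*D) = (A*C)*(B*D) := by noncomm_ring
    have e3 : (A*C)*(D*B) = (A*(C*D))*B := by noncomm_ring
    rw [e1, e2, hBD, mul_smul_comm, e3, hCD, mul_smul_comm, smul_mul_assoc, smul_smul]
  rw [h1, h2, smul_smul, smul_smul, show β*(α*γ) = α*(β*γ) by ring]

lemma geom_zero {z : ℂ} (hz1 : z ≠ 1) (hzq : z ^ q = 1) :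
    ∑ t : Fin q, z ^ (t : ℕ) = 0 := by
  rw [Fin.sum_univ_eq_sum_range (fun i => z ^ i) q, geom_sum_eq hz1, hzq]
  simp

lemma char_sum (hq : 1 < q) (hΩ : IsPrimitiveRoot Ω q) {u v : Fin q} (h : u ≠ v) :
    ∑ t : Fin q, (Ω ^ (u : ℕ) * (Ω ^ (v : ℕ))⁻¹) ^ (t : ℕ) = 0 := by
  have hΩ0 : Ω ≠ 0 := hΩ.ne_zero (by omega)
  have hv0 : Ω ^ (v : ℕ) ≠ 0 := pow_ne_zero _ hΩ0
  apply geom_zero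
  · intro hz
    apply h
    have : Ω ^ (u : ℕ) = Ω ^ (v : ℕ) := by
      field_simp at hz; exact hz
    exact Fin.val_injective (hΩ.pow_inj u.isLt v.isLt this)
  · rw [mul_pow, inv_pow, ← pow_mul, ← pow_mul, mul_comm (u : ℕ) q,
      mul_comm (v : ℕ) q, pow_mul, pow_mul, hΩ.pow_eq_one, one_pow, one_pow, inv_one,
      mul_one]

lemma orth (hq : 1 < q) (hΩ : IsPrimitiveRoot Ω q) {a a₀ : Fin k → Fin q} (h : a ≠ a₀) :
    ∑ m : Fin k → Fin q,
      (Ω ^ (∑ j, (m j : ℕ) * (a j : ℕ)) * (Ω ^ (∑ j, (m j : ℕ) * (a₀ j : ℕ)))⁻¹) = 0 := by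
  have step : ∀ m : Fin k → Fin q,
      Ω ^ (∑ j, (m j : ℕ) * (a j : ℕ)) * (Ω ^ (∑ j, (m j : ℕ) * (a₀ j : ℕ)))⁻¹
        = ∏ j, (Ω ^ (a j : ℕ) * (Ω ^ (a₀ j : ℕ))⁻¹) ^ (m j : ℕ) := by
    intro m
    rw [← Finset.prod_pow_eq_pow_sum, ← Finset.prod_pow_eq_pow_sum,
      ← Finset.prod_inv_distrib, ← Finset.prod_mul_distrib]
    refine Finset.prod_congr rfl fun j _ => ?_
    rw [mul_pow, inv_pow, ← pow_mul, ← pow_mul, Nat.mul_comm (a j : ℕ) (m j : ℕ),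
      Nat.mul_comm (a₀ j : ℕ) (m j : ℕ)]
  simp only [step]
  have hfact := Finset.prod_univ_sum (fun _ : Fin k => (Finset.univ : Finset (Fin q)))
    (fun j t => (Ω ^ (a j : ℕ) * (Ω ^ (a₀ j : ℕ))⁻¹) ^ (t : ℕ))
  rw [Fintype.piFinset_univ] at hfact
  rw [← hfact]
  obtain ⟨j₀, hj₀⟩ := Function.ne_iff.mp h
  exact Finset.prod_eq_zero (mem_univ j₀) (char_sum hq hΩ hj₀)

/-- the dot pairing of exponent tuples -/
abbrev dt (f g : Fin k → Fin q) : ℕ := ∑ j, (f j : ℕ) * (g j : ℕ)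

lemma dt_comm (f g : Fin k → Fin q) : dt f g = dt g f :=
  Finset.sum_congr rfl fun j _ => Nat.mul_comm _ _

/-- the monomial `X^a` -/
noncomputable abbrev Xp (X : Fin k → Matrix (Fin d) (Fin d) ℂ)
    (hXX : ∀ i j, Commute (X i) (X j)) (a : Fin k → Fin q) : Matrix (Fin d) (Fin d) ℂ :=
  pprod X hXX univ (fun j => (a j : ℕ))

end WeylDim



open Matrix in
/-- Tensor product of `k` copies of the `Ω`-Weyl algebra: if invertible `d×d` matrices
`X_j, Z_j` (`1 ≤ j ≤ k`) satisfy `Z_j X_j = Ω X_j Z_j` with `Ω` a primitive `q`-th root of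
unity, and all other pairs commute, then `d ≥ q^k`. -/
theorem weyl_algebra_tensor_dimension_bound (k d q : ℕ) (hd : 0 < d) (hq : 1 < q)
    (Ω : ℂ) (hΩ : IsPrimitiveRoot Ω q)
    (X Z : Fin k → Matrix (Fin d) (Fin d) ℂ)
    (hX : ∀ j, IsUnit (X j)) (hZ : ∀ j, IsUnit (Z j))
    (hrel : ∀ j, Z j * X j = Ω • (X j * Z j))
    (hXX : ∀ i j, Commute (X i) (X j))
    (hZZ : ∀ i j, Commute (Z i) (Z j))
    (hXZ : ∀ i j, i ≠ j → Commute (X i) (Z j)) :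
    q ^ k ≤ d := by
  classical
  have hq0 : q ≠ 0 := by omega
  haveI : NeZero q := ⟨hq0⟩
  have hΩ0 : Ω ≠ 0 := hΩ.ne_zero hq0
  set Xp := fun a : Fin k → Fin q =>
    WeylDim.pprod X hXX Finset.univ (fun j => (a j : ℕ)) with hXpdef
  set Zp := fun b : Fin k → Fin q =>
    WeylDim.pprod Z hZZ Finset.univ (fun j => (b j : ℕ)) with hZpdef
  set W := fun p : (Fin k → Fin q) × (Fin k → Fin q) => Xp p.1 * Zp p.2 with hWdef
  set χ := fun (p g : (Fin k → Fin q) × (Fin k → Fin q)) =>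
    Ω ^ WeylDim.dt g.1 p.1 * (Ω ^ WeylDim.dt p.2 g.2)⁻¹ with hχdef
  have hswap : ∀ mm aa : Fin k → Fin q,
      Zp mm * Xp aa = Ω ^ WeylDim.dt mm aa • (Xp aa * Zp mm) := by
    intro mm aa
    exact WeylDim.zp_xps hrel hXZ hZZ hXX Finset.univ _ _
  have hXc : ∀ aa nn : Fin k → Fin q, Xp aa * Xp nn = Xp nn * Xp aa := by
    intro aa nn
    exact (WeylDim.commute_pprod X hXX Finset.univ (fun j => (nn j : ℕ)) (Xp aa)
      (fun i _ => (WeylDim.commute_pprod X hXX Finset.univ (fun j => (aa j : ℕ))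
        (X i ^ (nn i : ℕ)) (fun l _ => (hXX i l).pow_pow _ _)).symm)).eq
  have hZc : ∀ aa nn : Fin k → Fin q, Zp aa * Zp nn = Zp nn * Zp aa := by
    intro aa nn
    exact (WeylDim.commute_pprod Z hZZ Finset.univ (fun j => (nn j : ℕ)) (Zp aa)
      (fun i _ => (WeylDim.commute_pprod Z hZZ Finset.univ (fun j => (aa j : ℕ))
        (Z i ^ (nn i : ℕ)) (fun l _ => (hZZ i l).pow_pow _ _)).symm)).eq
  have hUW : ∀ p g : (Fin k → Fin q) × (Fin k → Fin q),
      (Zp g.1 * Xp g.2) * W p = χ p g • (W p * (Zp g.1 * Xp g.2)) := by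
    intro p g
    have hb : (Ω ^ WeylDim.dt p.2 g.2) ≠ 0 := pow_ne_zero _ hΩ0
    have h0 := WeylDim.key_gen (Xp p.1) (Zp p.2) (Zp g.1) (Xp g.2)
      (Ω ^ WeylDim.dt g.1 p.1) (Ω ^ WeylDim.dt p.2 g.2) (Ω ^ WeylDim.dt g.1 g.2)
      (hXc p.1 g.2) (hZc p.2 g.1) (hswap g.1 p.1) (hswap g.1 g.2) (hswap p.2 g.2)
    calc (Zp g.1 * Xp g.2) * W p
        = (Ω ^ WeylDim.dt p.2 g.2)⁻¹ •
          ((Ω ^ WeylDim.dt p.2 g.2) • ((Zp g.1 * Xp g.2) * W p)) := by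
          rw [smul_smul, inv_mul_cancel₀ hb, one_smul]
      _ = (Ω ^ WeylDim.dt p.2 g.2)⁻¹ •
          ((Ω ^ WeylDim.dt g.1 p.1) • (W p * (Zp g.1 * Xp g.2))) := by
          exact congrArg (fun M => (Ω ^ WeylDim.dt p.2 g.2)⁻¹ • M) h0
      _ = χ p g • (W p * (Zp g.1 * Xp g.2)) := by
          simp only [hχdef, smul_smul]
          rw [mul_comm]
  have hXu : ∀ aa, IsUnit (Xp aa) := fun aa => WeylDim.isUnit_pprod X hXX hX _ _
  have hZu : ∀ aa, IsUnit (Zp aa) := fun aa => WeylDim.isUnit_pprod Z hZZ hZ _ _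
  have hWu : ∀ p, IsUnit (W p) := fun p => (hXu p.1).mul (hZu p.2)
  have hWne : ∀ p, W p ≠ 0 := by
    intro p h0
    obtain ⟨u, hu⟩ := hWu p
    have h1 : (1 : Matrix (Fin d) (Fin d) ℂ) = 0 := by
      calc (1 : Matrix (Fin d) (Fin d) ℂ) = ↑u⁻¹ * ↑u := (Units.inv_mul u).symm
      _ = ↑u⁻¹ * W p := by rw [hu]
      _ = 0 := by rw [h0, mul_zero]
    have h2 := congr_fun (congr_fun h1 ⟨0, hd⟩) ⟨0, hd⟩
    simp [Matrix.one_apply] at h2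
  have hχ0 : ∀ p g, χ p g ≠ 0 := by
    intro p g
    simp only [hχdef]
    exact mul_ne_zero (pow_ne_zero _ hΩ0) (inv_ne_zero (pow_ne_zero _ hΩ0))
  have horth : ∀ p p' : (Fin k → Fin q) × (Fin k → Fin q), p ≠ p' →
      ∑ g : (Fin k → Fin q) × (Fin k → Fin q), (χ p' g)⁻¹ * χ p g = 0 := by
    intro p p' hp
    have hterm : ∀ g : (Fin k → Fin q) × (Fin k → Fin q),
        (χ p' g)⁻¹ * χ p g =
        (Ω ^ WeylDim.dt g.1 p.1 * (Ω ^ WeylDim.dt g.1 p'.1)⁻¹) *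
        (Ω ^ WeylDim.dt p'.2 g.2 * (Ω ^ WeylDim.dt p.2 g.2)⁻¹) := by
      intro g
      simp only [hχdef]
      rw [mul_inv, inv_inv]
      ring
    rw [Finset.sum_congr rfl (fun g _ => hterm g), Fintype.sum_prod_type]
    have hfac : ∀ m : Fin k → Fin q,
        (∑ n : Fin k → Fin q,
          (Ω ^ WeylDim.dt m p.1 * (Ω ^ WeylDim.dt m p'.1)⁻¹) *
          (Ω ^ WeylDim.dt p'.2 n * (Ω ^ WeylDim.dt p.2 n)⁻¹))
        = (Ω ^ WeylDim.dt m p.1 * (Ω ^ WeylDim.dt m p'.1)⁻¹) *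
          ∑ n : Fin k → Fin q,
            (Ω ^ WeylDim.dt p'.2 n * (Ω ^ WeylDim.dt p.2 n)⁻¹) :=
      fun m => (Finset.mul_sum _ _ _).symm
    rw [Finset.sum_congr rfl (fun m _ => hfac m), ← Finset.sum_mul]
    have hcases : p.1 ≠ p'.1 ∨ p.2 ≠ p'.2 := by
      by_contra hcon
      push_neg at hcon
      exact hp (Prod.ext hcon.1 hcon.2)
    rcases hcases with h1 | h2
    · exact mul_eq_zero_of_left (WeylDim.orth hq hΩ h1) _
    · refine mul_eq_zero_of_right _ ?_
      simp only [WeylDim.dt_comm p'.2, WeylDim.dt_comm p.2]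
      exact WeylDim.orth hq hΩ (Ne.symm h2)
  have hdiag : ∀ p' : (Fin k → Fin q) × (Fin k → Fin q),
      ∑ g : (Fin k → Fin q) × (Fin k → Fin q), (χ p' g)⁻¹ * χ p' g
        = (Fintype.card ((Fin k → Fin q) × (Fin k → Fin q)) : ℂ) := by
    intro p'
    rw [Finset.sum_congr rfl (fun g _ => inv_mul_cancel₀ (hχ0 p' g))]
    simp [Finset.card_univ]
  have li : LinearIndependent ℂ W := by
    rw [Fintype.linearIndependent_iff]
    intro c hc p₀
    have hstep : ∀ g : (Fin k → Fin q) × (Fin k → Fin q),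
        ∑ p : (Fin k → Fin q) × (Fin k → Fin q), (c p * χ p g) • W p = 0 := by
      intro g
      have h1 : (Zp g.1 * Xp g.2) * (∑ p, c p • W p)
          = (∑ p, (c p * χ p g) • W p) * (Zp g.1 * Xp g.2) := by
        rw [Finset.mul_sum, Finset.sum_mul]
        refine Finset.sum_congr rfl fun p _ => ?_
        rw [mul_smul_comm, hUW p g, smul_smul, smul_mul_assoc]
      rw [hc, mul_zero] at h1
      obtain ⟨u, hu⟩ := (hZu g.1).mul (hXu g.2)
      calc ∑ p, (c p * χ p g) • W p
          = (∑ p, (c p * χ p g) • W p) * (↑u * ↑u⁻¹) := by rw [Units.mul_inv, mul_one]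
        _ = ((∑ p, (c p * χ p g) • W p) * ↑u) * ↑u⁻¹ := by rw [mul_assoc]
        _ = 0 := by rw [hu, ← h1, zero_mul]
    have hT : ∑ p : (Fin k → Fin q) × (Fin k → Fin q),
        (c p * ∑ g, (χ p₀ g)⁻¹ * χ p g) • W p = 0 := by
      have e1 : ∀ p : (Fin k → Fin q) × (Fin k → Fin q),
          (c p * ∑ g, (χ p₀ g)⁻¹ * χ p g) • W p
            = ∑ g, (χ p₀ g)⁻¹ • ((c p * χ p g) • W p) := by
        intro p
        rw [Finset.mul_sum, Finset.sum_smul]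
        refine Finset.sum_congr rfl fun g _ => ?_
        rw [smul_smul, mul_left_comm]
      rw [Finset.sum_congr rfl (fun p _ => e1 p), Finset.sum_comm]
      refine Finset.sum_eq_zero fun g _ => ?_
      rw [← Finset.smul_sum, hstep g, smul_zero]
    rw [Finset.sum_eq_single p₀
        (fun p _ hp => by rw [horth p p₀ hp, mul_zero, zero_smul])
        (fun h => absurd (Finset.mem_univ p₀) h), hdiag p₀] at hT
    rcases smul_eq_zero.mp hT with h | h
    · rcases mul_eq_zero.mp h with h' | h'
      · exact h'
      · exact absurd h' (Nat.cast_ne_zero.mpr Fintype.card_ne_zero)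
    · exact absurd h (hWne p₀)
  have hcard := li.fintype_card_le_finrank
  have h1 : Fintype.card ((Fin k → Fin q) × (Fin k → Fin q)) = q ^ k * q ^ k := by
    simp [Fintype.card_fun]
  have h2 : Module.finrank ℂ (Matrix (Fin d) (Fin d) ℂ) = d * d := by
    rw [Module.finrank_matrix]
    simp
  rw [h1, h2] at hcard
  by_contra hcon
  push_neg at hcon
  nlinarith
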